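/- For every μ > 0 there exist constants c ≥ 1 and N ≥ 2 such that for every integer n with |n| ≥ N, (1/c) e^{μ|n| log|n| − c|n|} ≤ ∫_ℝ e^{nβ − (2/e) cosh(β/μ)} dβ ≤ c e^{μ|n| log|n| + c|n|}; in other words, the growth in n of the weight ∫_ℝ e^{nβ − (2/e) cosh(β/μ)} dβ is given by e^{μ|n| log|n|} up to factors of exponential order |n|. -/

import Mathlib

open MeasureTheory

namespace BesselWeightAux

open Real Set

/-- Young-type inequality: `u * v - exp v ≤ u * log u - u` for `u > 0`. -/
lemma key_exp {u : ℝ} (hu : 0 < u) (v : ℝ) : u * v - Real.exp v ≤ u * Real.log u - u := by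
  have h := Real.add_one_le_exp (v - Real.log u)
  have h2 : Real.exp (v - Real.log u) = Real.exp v / u := by
    rw [Real.exp_sub, Real.exp_log hu]
  rw [h2] at h
  have h3 := mul_le_mul_of_nonneg_left h hu.le
  rw [mul_div_cancel₀ _ hu.ne'] at h3
  nlinarith

lemma exp_abs_le_two_cosh (x : ℝ) : Real.exp |x| ≤ 2 * Real.cosh x := by
  rw [← Real.cosh_abs, Real.cosh_eq]
  have := Real.exp_pos (-|x|)
  linarith

lemma cosh_le_exp_of_nonneg {x : ℝ} (hx : 0 ≤ x) : Real.cosh x ≤ Real.exp x := by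
  rw [Real.cosh_eq]
  have h1 : Real.exp (-x) ≤ Real.exp x := Real.exp_le_exp.2 (by linarith)
  linarith


lemma integrable_exp_neg_abs' : Integrable (fun x : ℝ => Real.exp (-|x|)) := by
  have h1 : IntegrableOn (fun x : ℝ => Real.exp (-|x|)) (Iic 0) := by
    apply (integrableOn_exp_Iic 0).congr_fun _ measurableSet_Iic
    intro x hx
    simp only [Set.mem_Iic] at hx
    show Real.exp x = Real.exp (-|x|)
    rw [abs_of_nonpos hx, neg_neg]
  have h2 : IntegrableOn (fun x : ℝ => Real.exp (-|x|)) (Ioi 0) := by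
    apply (exp_neg_integrableOn_Ioi 0 one_pos).congr_fun _ measurableSet_Ioi
    intro x hx
    simp only [Set.mem_Ioi] at hx
    show Real.exp (-1 * x) = Real.exp (-|x|)
    rw [abs_of_pos hx, neg_one_mul]
  have h := h1.union h2
  rw [Set.Iic_union_Ioi] at h
  rwa [← integrableOn_univ]

/-- Pointwise upper bound with `-|β|` slack. -/
lemma pointwise_upper (μ m : ℝ) (hμ : 0 < μ) (hm : 0 ≤ m) (β : ℝ) :
    m * β - (2 / Real.exp 1) * Real.cosh (β / μ) ≤
      μ * (m + 1) * Real.log (μ * Real.exp 1 * (m + 1)) - |β| := by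
  have hE : (0 : ℝ) < Real.exp 1 := Real.exp_pos 1
  set u : ℝ := μ * Real.exp 1 * (m + 1) with hu
  have hu0 : 0 < u := by positivity
  have h1 : m * β ≤ m * |β| := mul_le_mul_of_nonneg_left (le_abs_self β) hm
  -- `exp(|β|/μ) ≤ 2 cosh(β/μ)`
  have h2 : Real.exp (|β| / μ) ≤ 2 * Real.cosh (β / μ) := by
    have : |β| / μ = |β / μ| := by
      rw [abs_div, abs_of_pos hμ]
    rw [this]
    exact exp_abs_le_two_cosh _
  have key := key_exp hu0 (|β| / μ)
  have hv : u * (|β| / μ) = Real.exp 1 * (m + 1) * |β| := by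
    field_simp [hu]
    ring
  rw [hv] at key
  -- divide by exp 1
  have key2 : (m + 1) * |β| - Real.exp (|β| / μ) / Real.exp 1 ≤
      μ * (m + 1) * Real.log u := by
    have hdiv : (Real.exp 1 * (m + 1) * |β| - Real.exp (|β| / μ)) / Real.exp 1 ≤
        (u * Real.log u - u) / Real.exp 1 := by
      exact div_le_div_of_nonneg_right key hE.le |>.trans_eq rfl
    have e1 : (Real.exp 1 * (m + 1) * |β| - Real.exp (|β| / μ)) / Real.exp 1 =
        (m + 1) * |β| - Real.exp (|β| / μ) / Real.exp 1 := by
      field_simp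
    have e2 : (u * Real.log u - u) / Real.exp 1 =
        μ * (m + 1) * Real.log u - μ * (m + 1) := by
      rw [hu]; field_simp
    rw [e1, e2] at hdiv
    have : 0 ≤ μ * (m + 1) := by positivity
    linarith
  have h2' : Real.exp (|β| / μ) / Real.exp 1 ≤ (2 / Real.exp 1) * Real.cosh (β / μ) := by
    have : (2 / Real.exp 1) * Real.cosh (β / μ) = (2 * Real.cosh (β / μ)) / Real.exp 1 := by
      ring
    rw [this]
    exact div_le_div_of_nonneg_right h2 hE.le
  linarith

/-- Integrability of the weight integrand for nonnegative coefficient. -/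
lemma integrable_weight (μ m : ℝ) (hμ : 0 < μ) (hm : 0 ≤ m) :
    Integrable (fun β : ℝ => Real.exp (m * β - (2 / Real.exp 1) * Real.cosh (β / μ))) := by
  set B : ℝ := μ * (m + 1) * Real.log (μ * Real.exp 1 * (m + 1)) with hB
  have hint : Integrable (fun β : ℝ => Real.exp B * Real.exp (-|β|)) := by
    apply Integrable.const_mul
    exact integrable_exp_neg_abs'
  apply hint.mono'
  · apply Continuous.aestronglyMeasurable
    fun_prop
  · filter_upwards with β
    rw [Real.norm_eq_abs, abs_of_pos (Real.exp_pos _), ← Real.exp_add]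
    exact Real.exp_le_exp.2 (by linarith [pointwise_upper μ m hμ hm β])

lemma integral_exp_neg_abs : (∫ x : ℝ, Real.exp (-|x|)) = 2 := by
  have h1 : IntegrableOn (fun x : ℝ => Real.exp (-|x|)) (Iic 0) :=
    integrable_exp_neg_abs'.integrableOn
  have h2 : IntegrableOn (fun x : ℝ => Real.exp (-|x|)) (Ioi 0) :=
    integrable_exp_neg_abs'.integrableOn
  have hdisj : Disjoint (Iic (0:ℝ)) (Ioi 0) := Iic_disjoint_Ioi le_rfl
  have := setIntegral_union hdisj measurableSet_Ioi h1 h2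
  rw [Set.Iic_union_Ioi] at this
  rw [← setIntegral_univ, this]
  have e1 : (∫ x : ℝ in Iic 0, Real.exp (-|x|)) = 1 := by
    rw [setIntegral_congr_fun measurableSet_Iic (g := Real.exp)
      (fun x hx => by simp only [Set.mem_Iic] at hx; rw [abs_of_nonpos hx, neg_neg])]
    exact integral_exp_Iic_zero
  have e2 : (∫ x : ℝ in Ioi 0, Real.exp (-|x|)) = 1 := by
    rw [setIntegral_congr_fun measurableSet_Ioi (g := fun x => Real.exp (-x))
      (fun x hx => by simp only [Set.mem_Ioi] at hx; rw [abs_of_pos hx])]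
    exact integral_exp_neg_Ioi_zero
  rw [e1, e2]; norm_num

/-- The upper bound for real coefficient `m ≥ 2`. -/
lemma upper_bound (μ m : ℝ) (hμ : 0 < μ) (hm : 2 ≤ m) :
    (∫ β : ℝ, Real.exp (m * β - (2 / Real.exp 1) * Real.cosh (β / μ))) ≤
      2 * Real.exp (μ * m * Real.log m + μ * (5 + 2 * |Real.log μ|) * m) := by
  have hm0 : (0:ℝ) ≤ m := by linarith
  set B : ℝ := μ * (m + 1) * Real.log (μ * Real.exp 1 * (m + 1)) with hB
  have step1 : (∫ β : ℝ, Real.exp (m * β - (2 / Real.exp 1) * Real.cosh (β / μ))) ≤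
      ∫ β : ℝ, Real.exp B * Real.exp (-|β|) := by
    apply integral_mono (integrable_weight μ m hμ hm0)
    · apply Integrable.const_mul
      exact integrable_exp_neg_abs'
    · intro β
      show Real.exp (m * β - (2 / Real.exp 1) * Real.cosh (β / μ)) ≤ Real.exp B * Real.exp (-|β|)
      rw [← Real.exp_add]
      exact Real.exp_le_exp.2 (by linarith [pointwise_upper μ m hμ hm0 β])
  have step2 : (∫ β : ℝ, Real.exp B * Real.exp (-|β|)) = 2 * Real.exp B := by
    rw [integral_const_mul, integral_exp_neg_abs]
    ring
  have hBle : B ≤ μ * m * Real.log m + μ * (5 + 2 * |Real.log μ|) * m := by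
    have hlogmpos : 0 < Real.log m := Real.log_pos (by linarith)
    have hlogm : Real.log m ≤ m := (Real.log_le_sub_one_of_pos (by linarith)).trans (by linarith)
    have hlm1 : Real.log (m + 1) ≤ Real.log m + 1 := by
      calc Real.log (m + 1) ≤ Real.log (2 * m) := by
            apply Real.log_le_log (by linarith) (by linarith)
        _ = Real.log 2 + Real.log m := Real.log_mul two_ne_zero (by linarith)
        _ ≤ Real.log m + 1 := by
            have := Real.log_le_sub_one_of_pos (zero_lt_two (α := ℝ))
            linarith
    have hexpand : Real.log (μ * Real.exp 1 * (m + 1)) =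
        Real.log μ + 1 + Real.log (m + 1) := by
      rw [Real.log_mul (by positivity) (by linarith), Real.log_mul hμ.ne' (Real.exp_ne_zero 1),
        Real.log_exp]
    rw [hB, hexpand]
    have habs : Real.log μ ≤ |Real.log μ| := le_abs_self _
    have habs0 : (0:ℝ) ≤ |Real.log μ| := abs_nonneg _
    calc μ * (m + 1) * (Real.log μ + 1 + Real.log (m + 1))
        ≤ μ * (m + 1) * (|Real.log μ| + 2 + Real.log m) := by
          apply mul_le_mul_of_nonneg_left _ (by positivity)
          linarith
      _ = μ * m * Real.log m + μ * Real.log m + (μ * m + μ) * (2 + |Real.log μ|) := by ring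
      _ ≤ μ * m * Real.log m + μ * m + (2 * (μ * m)) * (2 + |Real.log μ|) := by
          have e3 : μ * Real.log m ≤ μ * m := mul_le_mul_of_nonneg_left hlogm hμ.le
          have e4 : (μ * m + μ) * (2 + |Real.log μ|) ≤ (2 * (μ * m)) * (2 + |Real.log μ|) := by
            apply mul_le_mul_of_nonneg_right _ (by positivity)
            nlinarith
          linarith
      _ = μ * m * Real.log m + (5 * (μ * m) + 2 * (μ * m * |Real.log μ|)) := by ring
      _ = μ * m * Real.log m + μ * (5 + 2 * |Real.log μ|) * m := by ring
  calc (∫ β : ℝ, Real.exp (m * β - (2 / Real.exp 1) * Real.cosh (β / μ)))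
      ≤ 2 * Real.exp B := by rw [← step2]; exact step1
    _ ≤ 2 * Real.exp (μ * m * Real.log m + μ * (5 + 2 * |Real.log μ|) * m) := by
        have := Real.exp_le_exp.2 hBle
        linarith

/-- The lower bound for real coefficient `m ≥ 2`. -/
lemma lower_bound (μ m : ℝ) (hμ : 0 < μ) (hm : 2 ≤ m) :
    Real.exp (μ * m * Real.log m - (2 / Real.exp 1) * Real.exp (1 / μ) * m) ≤
      ∫ β : ℝ, Real.exp (m * β - (2 / Real.exp 1) * Real.cosh (β / μ)) := by
  have hm0 : (0:ℝ) < m := by linarith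
  have hE : (0 : ℝ) < Real.exp 1 := Real.exp_pos 1
  set β0 : ℝ := μ * Real.log m with hβ0
  have hlogm : 0 < Real.log m := Real.log_pos (by linarith)
  have hβ0nn : 0 ≤ β0 := by positivity
  have hptwise : ∀ β ∈ Set.Ioc β0 (β0 + 1),
      Real.exp (μ * m * Real.log m - (2 / Real.exp 1) * Real.exp (1 / μ) * m) ≤
        Real.exp (m * β - (2 / Real.exp 1) * Real.cosh (β / μ)) := by
    intro β hβ
    obtain ⟨hβ1, hβ2⟩ := hβ
    apply Real.exp_le_exp.2
    have hβnn : 0 ≤ β := le_trans hβ0nn hβ1.le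
    have hcosh : Real.cosh (β / μ) ≤ Real.exp (1 / μ) * m := by
      calc Real.cosh (β / μ) ≤ Real.exp (β / μ) := cosh_le_exp_of_nonneg (by positivity)
        _ ≤ Real.exp ((β0 + 1) / μ) :=
            Real.exp_le_exp.2 (div_le_div_of_nonneg_right hβ2 hμ.le)
        _ = Real.exp (1 / μ) * m := by
            rw [hβ0]
            rw [show (μ * Real.log m + 1) / μ = Real.log m + 1 / μ by field_simp]
            rw [Real.exp_add, Real.exp_log hm0]
            ring
    have h1 : μ * m * Real.log m ≤ m * β := by
      have : β0 ≤ β := hβ1.le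
      calc μ * m * Real.log m = m * β0 := by rw [hβ0]; ring
        _ ≤ m * β := mul_le_mul_of_nonneg_left this hm0.le
    have h2 : (2 / Real.exp 1) * Real.cosh (β / μ) ≤ (2 / Real.exp 1) * Real.exp (1 / μ) * m := by
      calc (2 / Real.exp 1) * Real.cosh (β / μ) ≤ (2 / Real.exp 1) * (Real.exp (1 / μ) * m) :=
            mul_le_mul_of_nonneg_left hcosh (by positivity)
        _ = (2 / Real.exp 1) * Real.exp (1 / μ) * m := by ring
    linarith
  have hint := integrable_weight μ m hμ hm0.le
  have hvol : (volume (Set.Ioc β0 (β0 + 1))).toReal = 1 := by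
    rw [Real.volume_Ioc]
    norm_num
  have hfin : volume (Set.Ioc β0 (β0 + 1)) ≠ ⊤ := by
    rw [Real.volume_Ioc]; exact ENNReal.ofReal_ne_top
  have hstep := setIntegral_ge_of_const_le_real measurableSet_Ioc hfin hptwise hint.integrableOn
  rw [measureReal_def, hvol, mul_one] at hstep
  calc Real.exp (μ * m * Real.log m - (2 / Real.exp 1) * Real.exp (1 / μ) * m)
      ≤ ∫ β in Set.Ioc β0 (β0 + 1),
          Real.exp (m * β - (2 / Real.exp 1) * Real.cosh (β / μ)) := hstep
    _ ≤ ∫ β : ℝ, Real.exp (m * β - (2 / Real.exp 1) * Real.cosh (β / μ)) :=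
        setIntegral_le_integral hint (Filter.Eventually.of_forall fun β => (Real.exp_pos _).le)

end BesselWeightAux

/-- Growth of the weight `∫_ℝ e^{nβ - (2/e) cosh(β/μ)} dβ` (a modified Bessel function
`K_{μn}(2/e)` after a change of variables): for every `μ > 0` there are `c ≥ 1` and an
integer `N ≥ 2` such that for `|n| ≥ N` the weight is comparable to `e^{μ|n| log|n|}`
up to factors of exponential order `|n|`. -/
theorem bessel_weight_growth (μ : ℝ) (hμ : 0 < μ) :
    ∃ c : ℝ, 1 ≤ c ∧ ∃ N : ℕ, 2 ≤ N ∧ ∀ n : ℤ, (N : ℝ) ≤ |(n : ℝ)| →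
      (1 / c) * Real.exp (μ * |(n : ℝ)| * Real.log |(n : ℝ)| - c * |(n : ℝ)|) ≤
          (∫ β : ℝ, Real.exp ((n : ℝ) * β - (2 / Real.exp 1) * Real.cosh (β / μ))) ∧
        (∫ β : ℝ, Real.exp ((n : ℝ) * β - (2 / Real.exp 1) * Real.cosh (β / μ))) ≤
          c * Real.exp (μ * |(n : ℝ)| * Real.log |(n : ℝ)| + c * |(n : ℝ)|) := by
  set c : ℝ := 2 + μ * (5 + 2 * |Real.log μ|) + (2 / Real.exp 1) * Real.exp (1 / μ) with hc
  have hE : (0 : ℝ) < Real.exp 1 := Real.exp_pos 1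
  have hcterms : 0 ≤ μ * (5 + 2 * |Real.log μ|) := by positivity
  have hcterms2 : 0 ≤ (2 / Real.exp 1) * Real.exp (1 / μ) := by positivity
  have hc1 : (1:ℝ) ≤ c := by rw [hc]; linarith
  refine ⟨c, hc1, 2, le_refl 2, fun n hn => ?_⟩
  set m : ℝ := |(n : ℝ)| with hm
  have hm2 : 2 ≤ m := by
    rw [hm]; simpa using hn
  -- reduce to nonneg coefficient via symmetry
  have hsym : (∫ β : ℝ, Real.exp ((n : ℝ) * β - (2 / Real.exp 1) * Real.cosh (β / μ))) =
      ∫ β : ℝ, Real.exp (m * β - (2 / Real.exp 1) * Real.cosh (β / μ)) := by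
    rcases abs_cases ((n : ℝ)) with ⟨h, _⟩ | ⟨h, _⟩
    · rw [hm, h]
    · rw [hm, h]
      have hneg := MeasureTheory.integral_neg_eq_self
        (fun β : ℝ => Real.exp ((n : ℝ) * β - (2 / Real.exp 1) * Real.cosh (β / μ))) volume
      rw [← hneg]
      congr 1
      ext β
      show Real.exp ((n : ℝ) * (-β) - (2 / Real.exp 1) * Real.cosh (-β / μ)) =
        Real.exp (-(n : ℝ) * β - (2 / Real.exp 1) * Real.cosh (β / μ))
      rw [neg_div, Real.cosh_neg]
      ring_nf
  rw [hsym]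
  constructor
  · -- lower bound
    have hlow := BesselWeightAux.lower_bound μ m hμ hm2
    have h1c : 1 / c ≤ 1 := by
      rw [div_le_one (by linarith)]; linarith
    have hexp : Real.exp (μ * m * Real.log m - c * m) ≤
        Real.exp (μ * m * Real.log m - (2 / Real.exp 1) * Real.exp (1 / μ) * m) := by
      apply Real.exp_le_exp.2
      have : (2 / Real.exp 1) * Real.exp (1 / μ) * m ≤ c * m := by
        apply mul_le_mul_of_nonneg_right _ (by linarith)
        rw [hc]; linarith
      linarith
    calc (1 / c) * Real.exp (μ * m * Real.log m - c * m)
        ≤ 1 * Real.exp (μ * m * Real.log m - c * m) := by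
          apply mul_le_mul_of_nonneg_right h1c (Real.exp_pos _).le
      _ = Real.exp (μ * m * Real.log m - c * m) := one_mul _
      _ ≤ Real.exp (μ * m * Real.log m - (2 / Real.exp 1) * Real.exp (1 / μ) * m) := hexp
      _ ≤ ∫ β : ℝ, Real.exp (m * β - (2 / Real.exp 1) * Real.cosh (β / μ)) := hlow
  · -- upper bound
    have hup := BesselWeightAux.upper_bound μ m hμ hm2
    have hexp : Real.exp (μ * m * Real.log m + μ * (5 + 2 * |Real.log μ|) * m) ≤
        Real.exp (μ * m * Real.log m + c * m) := by
      apply Real.exp_le_exp.2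
      have : μ * (5 + 2 * |Real.log μ|) * m ≤ c * m := by
        apply mul_le_mul_of_nonneg_right _ (by linarith)
        rw [hc]; linarith
      linarith
    calc (∫ β : ℝ, Real.exp (m * β - (2 / Real.exp 1) * Real.cosh (β / μ)))
        ≤ 2 * Real.exp (μ * m * Real.log m + μ * (5 + 2 * |Real.log μ|) * m) := hup
      _ ≤ c * Real.exp (μ * m * Real.log m + c * m) := by
          have h2c : (2:ℝ) ≤ c := by rw [hc]; linarith
          have := Real.exp_pos (μ * m * Real.log m + c * m)
          nlinarith [Real.exp_pos (μ * m * Real.log m + μ * (5 + 2 * |Real.log μ|) * m), hexp]
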